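/- Let H be a complex Hilbert space, A a bounded self-adjoint operator on H, and λ₀ ≤ 0 a real number with Re⟨Au,u⟩ ≥ λ₀‖u‖² for all u ∈ H. Let J and J' be bounded self-adjoint operators on H with 0 ≤ Re⟨Ju,u⟩ ≤ ‖u‖² for all u, and J∘J + J'∘J' = 1. Let γ ≥ 0 satisfy ‖[J,[J,A]]‖ ≤ γ and ‖[J',[J',A]]‖ ≤ γ, and let α > 0 satisfy Re⟨A(J'u),J'u⟩ ≥ α‖J'u‖² for all u ∈ H. Let E be an orthogonal projection on H (a self-adjoint idempotent bounded operator) such that Re⟨A(Eu),Eu⟩ ≤ λ‖Eu‖² for all u ∈ H, where λ is a real number. If α > λ + γ, then for every u ∈ H one has ‖J(Eu)‖² ≥ ((α−λ−γ)/(α−λ₀))·‖Eu‖². -/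

import Mathlib

/-- **Localization estimate for spectral projections** (Proposition on localization).
If `A` is self-adjoint with `Re⟨Au,u⟩ ≥ λ₀‖u‖²`, `J, J'` are self-adjoint with
`0 ≤ Re⟨Ju,u⟩ ≤ ‖u‖²` and `J² + J'² = 1`, the double commutators `[J,[J,A]]` and
`[J',[J',A]]` have norm at most `γ`, `Re⟨A J'u, J'u⟩ ≥ α‖J'u‖²`, and `E` is an orthogonal
projection with `Re⟨A Eu, Eu⟩ ≤ λ‖Eu‖²`, then `α > λ + γ` implies
`‖J(Eu)‖² ≥ ((α−λ−γ)/(α−λ₀))‖Eu‖²` for all `u`. -/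
theorem localization_lower_bound {H : Type*} [NormedAddCommGroup H]
    [InnerProductSpace ℂ H] [CompleteSpace H]
    (A J J' E : H →L[ℂ] H)
    (hA : IsSelfAdjoint A)
    (lam₀ : ℝ) (hlam₀ : lam₀ ≤ 0)
    (hAlow : ∀ u : H, lam₀ * ‖u‖ ^ 2 ≤ (inner ℂ (A u) u).re)
    (hJ : IsSelfAdjoint J) (hJ' : IsSelfAdjoint J')
    (hJ0 : ∀ u : H, 0 ≤ (inner ℂ (J u) u).re)
    (hJ1 : ∀ u : H, (inner ℂ (J u) u).re ≤ ‖u‖ ^ 2)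
    (hJJ' : J * J + J' * J' = 1)
    (γ : ℝ) (hγ : 0 ≤ γ)
    (hcommJ : ‖⁅J, ⁅J, A⁆⁆‖ ≤ γ) (hcommJ' : ‖⁅J', ⁅J', A⁆⁆‖ ≤ γ)
    (α : ℝ) (hα : 0 < α)
    (hAJ' : ∀ u : H, α * ‖J' u‖ ^ 2 ≤ (inner ℂ (A (J' u)) (J' u)).re)
    (hEproj : E * E = E) (hEsa : IsSelfAdjoint E)
    (lam : ℝ)
    (hAE : ∀ u : H, (inner ℂ (A (E u)) (E u)).re ≤ lam * ‖E u‖ ^ 2)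
    (hgap : α > lam + γ) :
    ∀ u : H, ((α - lam - γ) / (α - lam₀)) * ‖E u‖ ^ 2 ≤ ‖J (E u)‖ ^ 2 := by
  intro u
  set v := E u with hv
  have hsymJ := hJ.isSymmetric
  have hsymJ' := hJ'.isSymmetric
  -- norm splitting: ‖Jv‖² + ‖J'v‖² = ‖v‖²
  have happ : ((J * J + J' * J') : H →L[ℂ] H) v = v := by rw [hJJ']; rfl
  have hsplit : ‖J v‖ ^ 2 + ‖J' v‖ ^ 2 = ‖v‖ ^ 2 := by
    have e1 : (inner ℂ (J (J v)) v : ℂ) = inner ℂ (J v) (J v) := hsymJ (J v) v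
    have e2 : (inner ℂ (J' (J' v)) v : ℂ) = inner ℂ (J' v) (J' v) := hsymJ' (J' v) v
    have h2 : (inner ℂ (((J * J + J' * J') : H →L[ℂ] H) v) v : ℂ)
        = inner ℂ (J v) (J v) + inner ℂ (J' v) (J' v) := by
      simp only [ContinuousLinearMap.add_apply, ContinuousLinearMap.mul_apply,
        inner_add_left, e1, e2]
    rw [happ] at h2
    simp only [inner_self_eq_norm_sq_to_K] at h2
    exact_mod_cast h2.symm
  -- IMS identity
  have key : J * A * J + J' * A * J' + (J * A * J + J' * A * J')
      + (⁅J, ⁅J, A⁆⁆ + ⁅J', ⁅J', A⁆⁆) = (J * J + J' * J') * A + A * (J * J + J' * J') := by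
    simp only [Ring.lie_def]
    noncomm_ring
  rw [hJJ', one_mul, mul_one] at key
  have keyv := congrArg (fun T : H →L[ℂ] H => (inner ℂ (T v) v : ℂ).re) key
  simp only [ContinuousLinearMap.add_apply, inner_add_left, Complex.add_re,
    ContinuousLinearMap.mul_apply] at keyv
  have hJAJ : (inner ℂ (J (A (J v))) v : ℂ) = inner ℂ (A (J v)) (J v) := hsymJ (A (J v)) v
  have hJAJ' : (inner ℂ (J' (A (J' v))) v : ℂ) = inner ℂ (A (J' v)) (J' v) := hsymJ' (A (J' v)) v
  rw [hJAJ, hJAJ'] at keyv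
  -- commutator bounds
  have hb : ∀ C : H →L[ℂ] H, ‖C‖ ≤ γ → -(γ * ‖v‖ ^ 2) ≤ (inner ℂ (C v) v : ℂ).re := by
    intro C hC
    have h1 : ‖(inner ℂ (C v) v : ℂ)‖ ≤ ‖C v‖ * ‖v‖ := norm_inner_le_norm _ _
    have h2 : ‖C v‖ ≤ ‖C‖ * ‖v‖ := C.le_opNorm v
    have h3 : |(inner ℂ (C v) v : ℂ).re| ≤ ‖(inner ℂ (C v) v : ℂ)‖ := Complex.abs_re_le_norm _
    nlinarith [norm_nonneg v, norm_nonneg (C v), norm_nonneg C,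
      neg_abs_le ((inner ℂ (C v) v : ℂ).re)]
  have hc1 := hb _ hcommJ
  have hc2 := hb _ hcommJ'
  have h1 := hAlow (J v)
  have h2 := hAJ' v
  have h3 := hAE u
  rw [← hv] at h3
  -- conclude
  have hden : 0 < α - lam₀ := by linarith
  rw [div_mul_eq_mul_div, div_le_iff₀ hden]
  nlinarith [sq_nonneg (‖J v‖), sq_nonneg (‖v‖), sq_nonneg (‖J' v‖)]
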